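/- Let L be a number field, Γ an order of L, K ⊆ L a subfield with ring of integers O_K, n = [L:K], and R = M_n(O_K). There exists an injective map from the set of Γ-structures on R (ring homomorphisms Γ → R modulo conjugation by units of R) into the product of the set of ring homomorphisms K → L with the set C_Γ of equivalence classes of fractional ideals of Γ. -/

import Mathlib

open NumberField

/-- Two unital ring homomorphisms `A → B` are conjugate if they differ by conjugation
by a unit of `B`.  A `Γ`-structure on `B` is an equivalence class for this relation. -/
def ConjRel (A B : Type*) [Ring A] [Ring B] (ρ ρ' : A →+* B) : Prop :=
  ∃ u : Bˣ, ∀ a : A, ρ' a = ↑u * ρ a * ↑u⁻¹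

/-- The fractional ideals of a subring `Γ` of a field `L`: the nonzero finitely
generated `Γ`-submodules of `L`. -/
def FractionalIdealOf (L : Type*) [Field L] (Γ : Subring L) : Type _ :=
  {I : Submodule Γ L // I ≠ ⊥ ∧ I.FG}

/-- Two fractional ideals `I, I'` of `Γ` are equivalent if `I' = x·I` for some
nonzero `x ∈ L`.  `C_Γ` is the set of equivalence classes, i.e. `Quot` of this
relation. -/
def FracIdealRel (L : Type*) [Field L] (Γ : Subring L)
    (I I' : FractionalIdealOf L Γ) : Prop :=
  ∃ x : L, x ≠ 0 ∧ ∀ y : L, y ∈ I'.1 ↔ ∃ z ∈ I.1, y = x * z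

section Ext

variable {L : Type*} [Field L] [CharZero L] {Γ : Subring L}
variable {M : Type*} [Ring M] [Algebra ℚ M]

lemma exists_int_mul_mem (hΓspan : Submodule.span ℚ (Γ : Set L) = ⊤) (x : L) :
    ∃ m : ℤ, m ≠ 0 ∧ (m : L) * x ∈ Γ := by
  have hx : x ∈ Submodule.span ℚ (Γ : Set L) := hΓspan ▸ Submodule.mem_top
  induction hx using Submodule.span_induction with
  | mem y hy => exact ⟨1, one_ne_zero, by simpa using hy⟩
  | zero => exact ⟨1, one_ne_zero, by simpa using Γ.zero_mem⟩
  | add y z _ _ hy hz =>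
      obtain ⟨m, hm, hmy⟩ := hy
      obtain ⟨k, hk, hkz⟩ := hz
      refine ⟨m * k, mul_ne_zero hm hk, ?_⟩
      have : ((m * k : ℤ) : L) * (y + z) = (k : L) * ((m : L) * y) + (m : L) * ((k : L) * z) := by
        push_cast; ring
      rw [this]
      exact Subring.add_mem _ (Subring.mul_mem _ (intCast_mem Γ k) hmy)
        (Subring.mul_mem _ (intCast_mem Γ m) hkz)
  | smul q y _ hy =>
      obtain ⟨m, hm, hmy⟩ := hy
      refine ⟨(q.den : ℤ) * m, mul_ne_zero (by exact_mod_cast q.den_nz) hm, ?_⟩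
      have hq : (q.den : ℚ) * q = (q.num : ℚ) := by
        rw [mul_comm]; exact_mod_cast Rat.mul_den_eq_num q
      have hqL : ((q.den : ℤ) : L) * (q : L) = ((q.num : ℤ) : L) := by
        exact_mod_cast congrArg (algebraMap ℚ L) hq
      have hsmul : q • y = (q : L) * y := Rat.smul_def q y
      have : (((q.den : ℤ) * m : ℤ) : L) * (q • y) = ((q.num : ℤ) : L) * ((m : L) * y) := by
        rw [hsmul]
        push_cast at hqL ⊢
        linear_combination ((m : L) * y) * hqL
      rw [this]
      exact Subring.mul_mem _ (intCast_mem Γ q.num) hmy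

variable (ρ : Γ →+* M)

/-- The extension of `ρ : Γ →+* M` to `L`, defined by clearing denominators. -/
noncomputable def extFun (hΓ : ∀ x : L, ∃ m : ℤ, m ≠ 0 ∧ (m : L) * x ∈ Γ) (x : L) : M :=
  (((hΓ x).choose : ℚ))⁻¹ • ρ ⟨((hΓ x).choose : L) * x, (hΓ x).choose_spec.2⟩

variable (hΓ : ∀ x : L, ∃ m : ℤ, m ≠ 0 ∧ (m : L) * x ∈ Γ)

lemma extFun_spec (x : L) (m : ℤ) (hm : m ≠ 0) (h : (m : L) * x ∈ Γ) :
    (m : ℚ) • extFun ρ hΓ x = ρ ⟨(m : L) * x, h⟩ := by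
  set k : ℤ := (hΓ x).choose with hk
  have hk0 : k ≠ 0 := (hΓ x).choose_spec.1
  have hkx : (k : L) * x ∈ Γ := (hΓ x).choose_spec.2
  have hkQ : (k : ℚ) ≠ 0 := Int.cast_ne_zero.mpr hk0
  apply smul_right_injective M hkQ
  show (k : ℚ) • ((m : ℚ) • extFun ρ hΓ x) = (k : ℚ) • ρ ⟨(m : L) * x, h⟩
  have e1 : (k : ℚ) • ((m : ℚ) • extFun ρ hΓ x)
      = (m : ℚ) • ρ ⟨(k : L) * x, hkx⟩ := by
    rw [smul_comm]
    congr 1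
    show (k : ℚ) • ((k : ℚ))⁻¹ • ρ ⟨(k : L) * x, hkx⟩ = _
    rw [smul_inv_smul₀ hkQ]
  rw [e1]
  rw [Int.cast_smul_eq_zsmul, Int.cast_smul_eq_zsmul, ← map_zsmul, ← map_zsmul]
  congr 1
  ext
  show (m : ℤ) • ((k : L) * x) = (k : ℤ) • ((m : L) * x)
  rw [zsmul_eq_mul, zsmul_eq_mul]
  push_cast
  ring

lemma extFun_unique (g : L → M) (x : L)
    (hg : ∀ (m : ℤ) (_ : m ≠ 0) (h : (m : L) * x ∈ Γ), (m : ℚ) • g x = ρ ⟨(m : L) * x, h⟩) :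
    g x = extFun ρ hΓ x := by
  obtain ⟨m, hm, h⟩ := hΓ x
  have h1 := hg m hm h
  have h2 := extFun_spec ρ hΓ x m hm h
  have hmQ : (m : ℚ) ≠ 0 := Int.cast_ne_zero.mpr hm
  apply smul_right_injective M hmQ
  show (m : ℚ) • g x = (m : ℚ) • extFun ρ hΓ x
  rw [h1, h2]

/-- The extension of `ρ` to a ring hom `L →+* M`. -/
noncomputable def extHom : L →+* M where
  toFun := extFun ρ hΓ
  map_one' := by
    have hmem : ((1 : ℤ) : L) * 1 ∈ Γ := by simpa using Γ.one_mem
    have := extFun_spec ρ hΓ 1 1 one_ne_zero hmem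
    have h2 : (⟨((1 : ℤ) : L) * 1, hmem⟩ : Γ) = 1 := Subtype.ext (by push_cast; ring)
    rw [h2, map_one] at this
    simpa using this
  map_mul' x y := by
    show extFun ρ hΓ (x * y) = extFun ρ hΓ x * extFun ρ hΓ y
    obtain ⟨m, hm, hx⟩ := hΓ x
    obtain ⟨k, hk, hy⟩ := hΓ y
    have hmk : ((m * k : ℤ) : ℚ) ≠ 0 := Int.cast_ne_zero.mpr (mul_ne_zero hm hk)
    apply smul_right_injective M hmk
    show ((m * k : ℤ) : ℚ) • extFun ρ hΓ (x * y)
        = ((m * k : ℤ) : ℚ) • (extFun ρ hΓ x * extFun ρ hΓ y)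
    have hxy : ((m * k : ℤ) : L) * (x * y) ∈ Γ := by
      have : ((m * k : ℤ) : L) * (x * y) = ((m : L) * x) * ((k : L) * y) := by push_cast; ring
      rw [this]; exact Subring.mul_mem _ hx hy
    rw [extFun_spec ρ hΓ (x * y) (m * k) (mul_ne_zero hm hk) hxy]
    have e : ((m * k : ℤ) : ℚ) • (extFun ρ hΓ x * extFun ρ hΓ y)
        = ((m : ℚ) • extFun ρ hΓ x) * ((k : ℚ) • extFun ρ hΓ y) := by
      rw [smul_mul_smul_comm]
      norm_cast
    rw [e, extFun_spec ρ hΓ x m hm hx, extFun_spec ρ hΓ y k hk hy, ← map_mul]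
    congr 1
    ext
    show ((m * k : ℤ) : L) * (x * y) = ((m : L) * x) * ((k : L) * y)
    push_cast; ring
  map_zero' := by
    show extFun ρ hΓ 0 = 0
    have hmem : ((1 : ℤ) : L) * 0 ∈ Γ := by simpa using Γ.zero_mem
    have := extFun_spec ρ hΓ 0 1 one_ne_zero hmem
    have h2 : (⟨((1 : ℤ) : L) * 0, hmem⟩ : Γ) = 0 := Subtype.ext (by push_cast; ring)
    rw [h2, map_zero] at this
    simpa using this
  map_add' x y := by
    show extFun ρ hΓ (x + y) = extFun ρ hΓ x + extFun ρ hΓ y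
    obtain ⟨m, hm, hx⟩ := hΓ x
    obtain ⟨k, hk, hy⟩ := hΓ y
    have hmk : ((m * k : ℤ) : ℚ) ≠ 0 := Int.cast_ne_zero.mpr (mul_ne_zero hm hk)
    apply smul_right_injective M hmk
    show ((m * k : ℤ) : ℚ) • extFun ρ hΓ (x + y)
        = ((m * k : ℤ) : ℚ) • (extFun ρ hΓ x + extFun ρ hΓ y)
    have hxy : ((m * k : ℤ) : L) * (x + y) ∈ Γ := by
      have : ((m * k : ℤ) : L) * (x + y) = (k : L) * ((m : L) * x) + (m : L) * ((k : L) * y) := by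
        push_cast; ring
      rw [this]
      exact Subring.add_mem _ (Subring.mul_mem _ (intCast_mem Γ k) hx)
        (Subring.mul_mem _ (intCast_mem Γ m) hy)
    rw [extFun_spec ρ hΓ (x + y) (m * k) (mul_ne_zero hm hk) hxy]
    rw [smul_add]
    have e1 : ((m * k : ℤ) : ℚ) • extFun ρ hΓ x = (k : ℚ) • ((m : ℚ) • extFun ρ hΓ x) := by
      rw [smul_smul]; norm_cast; rw [mul_comm]
    have e2 : ((m * k : ℤ) : ℚ) • extFun ρ hΓ y = (m : ℚ) • ((k : ℚ) • extFun ρ hΓ y) := by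
      rw [smul_smul]; norm_cast
    rw [e1, e2, extFun_spec ρ hΓ x m hm hx, extFun_spec ρ hΓ y k hk hy,
      Int.cast_smul_eq_zsmul, Int.cast_smul_eq_zsmul, ← map_zsmul, ← map_zsmul, ← map_add]
    congr 1
    ext
    show ((m * k : ℤ) : L) * (x + y) = (k : ℤ) • ((m : L) * x) + (m : ℤ) • ((k : L) * y)
    rw [zsmul_eq_mul, zsmul_eq_mul]
    push_cast; ring

lemma extHom_coe (γ : Γ) : extHom ρ hΓ (γ : L) = ρ γ := by
  have hmem : ((1 : ℤ) : L) * (γ : L) ∈ Γ := by simpa using γ.2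
  have := extFun_spec ρ hΓ (γ : L) 1 one_ne_zero hmem
  have h2 : (⟨((1 : ℤ) : L) * (γ : L), hmem⟩ : Γ) = γ := Subtype.ext (by push_cast; ring)
  rw [h2] at this
  have h3 : extFun ρ hΓ (γ : L) = ρ γ := by simpa using this
  exact h3

lemma extHom_qsmul (q : ℚ) (x : L) : extHom ρ hΓ (q • x) = q • extHom ρ hΓ x := by
  rcases eq_or_ne q 0 with rfl | hq
  · simp
  obtain ⟨m, hm, hx⟩ := hΓ x
  have hq0 : (q.den : ℚ) * q = (q.num : ℚ) := by
    rw [mul_comm]; exact_mod_cast Rat.mul_den_eq_num q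
  have hqL : ((q.den : ℤ) : L) * (q : L) = ((q.num : ℤ) : L) := by
    exact_mod_cast congrArg (algebraMap ℚ L) hq0
  have key : (((q.den : ℤ) * m : ℤ) : L) * (q • x) = ((q.num : ℤ) : L) * ((m : L) * x) := by
    rw [Rat.smul_def]
    push_cast at hqL ⊢
    linear_combination ((m : L) * x) * hqL
  have hmem : (((q.den : ℤ) * m : ℤ) : L) * (q • x) ∈ Γ := by
    rw [key]; exact Subring.mul_mem _ (intCast_mem Γ q.num) hx
  have hdm : ((q.den : ℤ) * m : ℤ) ≠ 0 := mul_ne_zero (by exact_mod_cast q.den_nz) hm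
  have h1 := extFun_spec ρ hΓ (q • x) ((q.den : ℤ) * m) hdm hmem
  have h2 : ρ ⟨(((q.den : ℤ) * m : ℤ) : L) * (q • x), hmem⟩
      = (q.num : ℚ) • ((m : ℚ) • extFun ρ hΓ x) := by
    rw [extFun_spec ρ hΓ x m hm hx]
    rw [Int.cast_smul_eq_zsmul, ← map_zsmul]
    congr 1
    ext
    show (((q.den : ℤ) * m : ℤ) : L) * (q • x) = (q.num : ℤ) • ((m : L) * x)
    rw [zsmul_eq_mul, key]
  rw [h2] at h1
  show extFun ρ hΓ (q • x) = q • extFun ρ hΓ x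
  have hdmQ : (((q.den : ℤ) * m : ℤ) : ℚ) ≠ 0 := Int.cast_ne_zero.mpr hdm
  apply smul_right_injective M hdmQ
  show (((q.den : ℤ) * m : ℤ) : ℚ) • extFun ρ hΓ (q • x)
      = (((q.den : ℤ) * m : ℤ) : ℚ) • (q • extFun ρ hΓ x)
  rw [h1, smul_smul, smul_smul]
  congr 1
  push_cast
  linear_combination (-(m : ℚ)) * hq0

end Ext

open Matrix

section Main

variable {L K : Type*} [Field L] [NumberField L] [Field K] [NumberField K] [Algebra K L]
variable {Γ : Subring L} {n : ℕ}
variable (ρ : Γ →+* Matrix (Fin n) (Fin n) (𝓞 K))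
variable (hΓ : ∀ x : L, ∃ m : ℤ, m ≠ 0 ∧ (m : L) * x ∈ Γ)

/-- The extension of (the entrywise coercion of) `ρ` to `L`. -/
noncomputable def ellH : L →+* Matrix (Fin n) (Fin n) K :=
  extHom ((RingHom.mapMatrix (algebraMap (𝓞 K) K)).comp ρ) hΓ

lemma ellH_coe (γ : Γ) : ellH ρ hΓ (γ : L) = (ρ γ).map (algebraMap (𝓞 K) K) :=
  extHom_coe _ hΓ γ

lemma ellH_spec (x : L) (m : ℤ) (hm : m ≠ 0) (h : (m : L) * x ∈ Γ) :
    (m : ℚ) • ellH ρ hΓ x = (((algebraMap (𝓞 K) K).mapMatrix).comp ρ) ⟨(m : L) * x, h⟩ :=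
  extFun_spec _ hΓ x m hm h

/-- The `ℚ`-linear map `x ↦ ℓ(x) · v`. -/
noncomputable def phiL (v : Fin n → K) : L →ₗ[ℚ] (Fin n → K) where
  toFun x := (ellH ρ hΓ x) *ᵥ v
  map_add' x y := by
    show ellH ρ hΓ (x + y) *ᵥ v = ellH ρ hΓ x *ᵥ v + ellH ρ hΓ y *ᵥ v
    rw [_root_.map_add, Matrix.add_mulVec]
  map_smul' q x := by
    show ellH ρ hΓ (q • x) *ᵥ v = q • _
    rw [show ellH ρ hΓ (q • x) = q • ellH ρ hΓ x from extHom_qsmul _ hΓ q x,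
      Matrix.smul_mulVec]

lemma phiL_apply (v : Fin n → K) (x : L) : phiL ρ hΓ v x = (ellH ρ hΓ x) *ᵥ v := rfl

lemma phiL_mul (v : Fin n → K) (x y : L) :
    phiL ρ hΓ v (x * y) = ellH ρ hΓ x *ᵥ phiL ρ hΓ v y := by
  rw [phiL_apply, phiL_apply, _root_.map_mul, Matrix.mulVec_mulVec]

lemma phiL_injective {v : Fin n → K} (hv : v ≠ 0) : Function.Injective (phiL ρ hΓ v) := by
  intro a b hab
  by_contra hne
  have hx : a - b ≠ 0 := sub_ne_zero.mpr hne
  have h0 : phiL ρ hΓ v (a - b) = 0 := by rw [_root_.map_sub, hab, sub_self]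
  apply hv
  calc v = (1 : Matrix (Fin n) (Fin n) K) *ᵥ v := (Matrix.one_mulVec v).symm
    _ = ellH ρ hΓ ((a - b)⁻¹ * (a - b)) *ᵥ v := by rw [inv_mul_cancel₀ hx, _root_.map_one]
    _ = ellH ρ hΓ (a - b)⁻¹ *ᵥ phiL ρ hΓ v (a - b) := by
        rw [_root_.map_mul, ← Matrix.mulVec_mulVec, phiL_apply]
    _ = 0 := by rw [h0, Matrix.mulVec_zero]

lemma finrank_L_eq (hn : n = Module.finrank K L) :
    Module.finrank ℚ L = Module.finrank ℚ (Fin n → K) := by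
  rw [Module.finrank_pi_fintype, Finset.sum_const, Finset.card_univ, Fintype.card_fin,
    smul_eq_mul, hn, ← Module.finrank_mul_finrank ℚ K L, mul_comm]

lemma phiL_bijective (hn : n = Module.finrank K L) {v : Fin n → K} (hv : v ≠ 0) :
    Function.Bijective (phiL ρ hΓ v) :=
  ⟨phiL_injective ρ hΓ hv,
    (LinearMap.injective_iff_surjective_of_finrank_eq_finrank (finrank_L_eq hn)).mp
      (phiL_injective ρ hΓ hv)⟩

variable {v : Fin n → K}

/-- `σ(c)` is the unique `x ∈ L` with `ℓ(x) v = c • v`. -/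
noncomputable def sigmaFun (hb : Function.Bijective (phiL ρ hΓ v)) (c : K) : L :=
  (hb.surjective (c • v)).choose

lemma sigmaFun_spec (hb : Function.Bijective (phiL ρ hΓ v)) (c : K) :
    phiL ρ hΓ v (sigmaFun ρ hΓ hb c) = c • v :=
  (hb.surjective (c • v)).choose_spec

lemma mulVec_sigma (hb : Function.Bijective (phiL ρ hΓ v)) (c : K) (w : Fin n → K) :
    ellH ρ hΓ (sigmaFun ρ hΓ hb c) *ᵥ w = c • w := by
  obtain ⟨y, rfl⟩ := hb.surjective w
  show ellH ρ hΓ (sigmaFun ρ hΓ hb c) *ᵥ (ellH ρ hΓ y *ᵥ v) = c • (ellH ρ hΓ y *ᵥ v)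
  rw [Matrix.mulVec_mulVec, ← _root_.map_mul, mul_comm, _root_.map_mul, ← Matrix.mulVec_mulVec,
    show ellH ρ hΓ (sigmaFun ρ hΓ hb c) *ᵥ v = c • v from sigmaFun_spec ρ hΓ hb c,
    Matrix.mulVec_smul]

/-- The ring homomorphism `σ : K →+* L` associated to `ρ` (and `v`). -/
noncomputable def sigmaHom (hb : Function.Bijective (phiL ρ hΓ v)) : K →+* L where
  toFun := sigmaFun ρ hΓ hb
  map_one' := by
    apply hb.injective
    rw [sigmaFun_spec, one_smul, phiL_apply, _root_.map_one, Matrix.one_mulVec]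
  map_mul' c c' := by
    apply hb.injective
    show phiL ρ hΓ v (sigmaFun ρ hΓ hb (c * c'))
        = phiL ρ hΓ v (sigmaFun ρ hΓ hb c * sigmaFun ρ hΓ hb c')
    rw [sigmaFun_spec, phiL_mul, sigmaFun_spec, Matrix.mulVec_smul, mulVec_sigma,
      smul_smul, mul_comm c c']
  map_zero' := by
    apply hb.injective
    rw [sigmaFun_spec, zero_smul, _root_.map_zero]
  map_add' c c' := by
    apply hb.injective
    show phiL ρ hΓ v (sigmaFun ρ hΓ hb (c + c'))
        = phiL ρ hΓ v (sigmaFun ρ hΓ hb c + sigmaFun ρ hΓ hb c')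
    rw [sigmaFun_spec, _root_.map_add, sigmaFun_spec, sigmaFun_spec, add_smul]

lemma sigmaHom_apply (hb : Function.Bijective (phiL ρ hΓ v)) (c : K) :
    sigmaHom ρ hΓ hb c = sigmaFun ρ hΓ hb c := rfl

lemma sigma_unique (hb : Function.Bijective (phiL ρ hΓ v)) (c : K) (x : L)
    (hx : phiL ρ hΓ v x = c • v) : x = sigmaFun ρ hΓ hb c :=
  hb.injective (by rw [hx, sigmaFun_spec])

/-- The fractional ideal associated to `ρ` and `v`. -/
noncomputable def idealSub (v : Fin n → K) : Submodule Γ L where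
  carrier := {x : L | ∀ i, phiL ρ hΓ v x i ∈ (algebraMap (𝓞 K) K).range}
  add_mem' := by
    intro a b ha hb i
    rw [_root_.map_add]
    exact add_mem (ha i) (hb i)
  zero_mem' := by
    intro i
    rw [_root_.map_zero]
    exact zero_mem _
  smul_mem' := by
    intro γ x hx i
    have hsm : (γ • x : L) = (γ : L) * x := rfl
    rw [hsm, phiL_mul, ellH_coe]
    show ∑ j, ((ρ γ).map (algebraMap (𝓞 K) K)) i j * phiL ρ hΓ v x j ∈ _
    refine sum_mem fun j _ => mul_mem ?_ (hx j)
    rw [Matrix.map_apply]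
    exact ⟨ρ γ i j, rfl⟩

lemma idealSub_mem (v : Fin n → K) (x : L) :
    x ∈ idealSub ρ hΓ v ↔ ∀ i, phiL ρ hΓ v x i ∈ (algebraMap (𝓞 K) K).range := Iff.rfl

end Main


lemma fracIdealRel_equivalence (L : Type*) [Field L] (Γ : Subring L) :
    Equivalence (FracIdealRel L Γ) where
  refl I := ⟨1, one_ne_zero, fun y =>
    ⟨fun hy => ⟨y, hy, (one_mul y).symm⟩, fun ⟨z, hz, hyz⟩ => by rwa [hyz, one_mul]⟩⟩
  symm {I I'} := fun ⟨x, hx, h⟩ => ⟨x⁻¹, inv_ne_zero hx, fun y => by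
    constructor
    · intro hy
      exact ⟨x * y, (h _).mpr ⟨y, hy, rfl⟩, by rw [← mul_assoc, inv_mul_cancel₀ hx, one_mul]⟩
    · rintro ⟨z, hz, rfl⟩
      obtain ⟨w, hw, rfl⟩ := (h z).mp hz
      rwa [← mul_assoc, inv_mul_cancel₀ hx, one_mul]⟩
  trans {I I' I''} := fun ⟨x, hx, h⟩ ⟨x', hx', h'⟩ => ⟨x' * x, mul_ne_zero hx' hx, fun y => by
    constructor
    · intro hy
      obtain ⟨z', hz', rfl⟩ := (h' y).mp hy
      obtain ⟨z, hz, rfl⟩ := (h z').mp hz'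
      exact ⟨z, hz, (mul_assoc _ _ _).symm⟩
    · rintro ⟨z, hz, rfl⟩
      rw [mul_assoc]
      exact (h' _).mpr ⟨x * z, (h _).mpr ⟨z, hz, rfl⟩, rfl⟩⟩

section Main2

variable {L K : Type*} [Field L] [NumberField L] [Field K] [NumberField K] [Algebra K L]
variable {Γ : Subring L} {n : ℕ}

lemma matmap_mul (B C : Matrix (Fin n) (Fin n) (𝓞 K)) :
    (B * C).map (algebraMap (𝓞 K) K) = B.map (algebraMap (𝓞 K) K) * C.map (algebraMap (𝓞 K) K) :=
  _root_.map_mul ((algebraMap (𝓞 K) K).mapMatrix) B C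

lemma matmap_one : ((1 : Matrix (Fin n) (Fin n) (𝓞 K)).map (algebraMap (𝓞 K) K)) = 1 :=
  _root_.map_one ((algebraMap (𝓞 K) K).mapMatrix (m := Fin n))

lemma matmap_inj (B C : Matrix (Fin n) (Fin n) (𝓞 K))
    (h : B.map (algebraMap (𝓞 K) K) = C.map (algebraMap (𝓞 K) K)) : B = C := by
  ext i j
  have h' : (B.map (algebraMap (𝓞 K) K)) i j = (C.map (algebraMap (𝓞 K) K)) i j := by rw [h]
  simpa using h'

variable (ρ ρ' : Γ →+* Matrix (Fin n) (Fin n) (𝓞 K))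
variable (hΓ : ∀ x : L, ∃ m : ℤ, m ≠ 0 ∧ (m : L) * x ∈ Γ)

/-- If `ρ'` is a conjugate of `ρ` then `ℓ'` is the corresponding conjugate of `ℓ`. -/
lemma ellH_conj (u : (Matrix (Fin n) (Fin n) (𝓞 K))ˣ)
    (h : ∀ a : Γ, ρ' a = (u : Matrix (Fin n) (Fin n) (𝓞 K)) * ρ a
      * ((u⁻¹ : (Matrix (Fin n) (Fin n) (𝓞 K))ˣ) : Matrix (Fin n) (Fin n) (𝓞 K))) (x : L) :
    ellH ρ' hΓ x = ((u : Matrix (Fin n) (Fin n) (𝓞 K)).map (algebraMap (𝓞 K) K))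
      * ellH ρ hΓ x * (((u⁻¹ : (Matrix (Fin n) (Fin n) (𝓞 K))ˣ) :
        Matrix (Fin n) (Fin n) (𝓞 K)).map (algebraMap (𝓞 K) K)) := by
  have key : ∀ (m : ℤ) (_ : m ≠ 0) (hmem : (m : L) * x ∈ Γ),
      (m : ℚ) • (((u : Matrix (Fin n) (Fin n) (𝓞 K)).map (algebraMap (𝓞 K) K))
          * ellH ρ hΓ x * (((u⁻¹ : (Matrix (Fin n) (Fin n) (𝓞 K))ˣ) :
            Matrix (Fin n) (Fin n) (𝓞 K)).map (algebraMap (𝓞 K) K)))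
        = (((algebraMap (𝓞 K) K).mapMatrix).comp ρ') ⟨(m : L) * x, hmem⟩ := by
    intro m hm hmem
    rw [← smul_mul_assoc, ← mul_smul_comm, ellH_spec ρ hΓ x m hm hmem]
    show _ * ((((algebraMap (𝓞 K) K).mapMatrix).comp ρ) ⟨(m : L) * x, hmem⟩) * _ = _
    show (↑u : Matrix (Fin n) (Fin n) (𝓞 K)).map (algebraMap (𝓞 K) K)
        * ((ρ ⟨(m : L) * x, hmem⟩).map (algebraMap (𝓞 K) K)) * _
        = (ρ' ⟨(m : L) * x, hmem⟩).map (algebraMap (𝓞 K) K)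
    rw [h ⟨(m : L) * x, hmem⟩, matmap_mul, matmap_mul]
  exact (extFun_unique (((algebraMap (𝓞 K) K).mapMatrix).comp ρ') hΓ
    (fun y => ((u : Matrix (Fin n) (Fin n) (𝓞 K)).map (algebraMap (𝓞 K) K))
      * ellH ρ hΓ y * (((u⁻¹ : (Matrix (Fin n) (Fin n) (𝓞 K))ˣ) :
        Matrix (Fin n) (Fin n) (𝓞 K)).map (algebraMap (𝓞 K) K))) x key).symm

/-- Multiplication by (the image of) a matrix over `𝓞 K` preserves integrality. -/
lemma matmap_mulVec_int (B : Matrix (Fin n) (Fin n) (𝓞 K)) (w : Fin n → K)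
    (hw : ∀ i, w i ∈ (algebraMap (𝓞 K) K).range) :
    ∀ i, ((B.map (algebraMap (𝓞 K) K)) *ᵥ w) i ∈ (algebraMap (𝓞 K) K).range := by
  intro i
  show ∑ j, (B.map (algebraMap (𝓞 K) K)) i j * w j ∈ _
  exact sum_mem fun j _ => mul_mem ⟨B i j, rfl⟩ (hw j)

/-- Multiplication by (the image of) a unit of `Mₙ(𝓞 K)` preserves integrality of vectors. -/
lemma unit_mulVec_int_iff (u : (Matrix (Fin n) (Fin n) (𝓞 K))ˣ) (w : Fin n → K) :
    (∀ i, (((u : Matrix (Fin n) (Fin n) (𝓞 K)).map (algebraMap (𝓞 K) K)) *ᵥ w) i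
        ∈ (algebraMap (𝓞 K) K).range)
      ↔ ∀ i, w i ∈ (algebraMap (𝓞 K) K).range := by
  constructor
  · intro hw i
    have e : (((u⁻¹ : (Matrix (Fin n) (Fin n) (𝓞 K))ˣ) : Matrix (Fin n) (Fin n) (𝓞 K)).map
        (algebraMap (𝓞 K) K)) *ᵥ (((u : Matrix (Fin n) (Fin n) (𝓞 K)).map
        (algebraMap (𝓞 K) K)) *ᵥ w) = w := by
      rw [Matrix.mulVec_mulVec, ← matmap_mul, u.inv_mul, matmap_one, Matrix.one_mulVec]
    rw [← e]
    exact matmap_mulVec_int (↑u⁻¹) _ hw i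
  · exact matmap_mulVec_int ↑u w

end Main2

section Main3

variable {L K : Type*} [Field L] [NumberField L] [Field K] [NumberField K] [Algebra K L]
variable {Γ : Subring L} {n : ℕ}
variable (ρ ρ' : Γ →+* Matrix (Fin n) (Fin n) (𝓞 K))
variable (hΓ : ∀ x : L, ∃ m : ℤ, m ≠ 0 ∧ (m : L) * x ∈ Γ)

lemma idealSub_fg {v : Fin n → K} (hv : v ≠ 0) : (idealSub ρ hΓ v).FG := by
  apply Submodule.FG.of_restrictScalars ℤ
  have hmem : ∀ x : ((idealSub ρ hΓ v).restrictScalars ℤ), ∀ i : Fin n,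
      ∃ a : 𝓞 K, algebraMap (𝓞 K) K a = phiL ρ hΓ v x.1 i := fun x i => x.2 i
  let g : ((idealSub ρ hΓ v).restrictScalars ℤ) →ₗ[ℤ] (Fin n → 𝓞 K) := {
    toFun := fun x i => (hmem x i).choose
    map_add' := by
      intro a b
      funext i
      apply NumberField.RingOfIntegers.coe_injective
      show algebraMap (𝓞 K) K ((hmem (a + b) i).choose)
          = algebraMap (𝓞 K) K ((hmem a i).choose + (hmem b i).choose)
      rw [_root_.map_add, (hmem (a + b) i).choose_spec, (hmem a i).choose_spec,
        (hmem b i).choose_spec]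
      show phiL ρ hΓ v ((a : L) + (b : L)) i = phiL ρ hΓ v (a : L) i + phiL ρ hΓ v (b : L) i
      rw [_root_.map_add]
      rfl
    map_smul' := by
      intro m a
      funext i
      apply NumberField.RingOfIntegers.coe_injective
      show algebraMap (𝓞 K) K ((hmem (m • a) i).choose)
          = algebraMap (𝓞 K) K (m • (hmem a i).choose)
      rw [map_zsmul, (hmem (m • a) i).choose_spec, (hmem a i).choose_spec]
      show phiL ρ hΓ v (m • (a : L)) i = m • phiL ρ hΓ v (a : L) i
      rw [map_zsmul]
      rfl }
  have hginj : Function.Injective g := by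
    intro a b hab
    apply Subtype.ext
    apply phiL_injective ρ hΓ hv
    funext i
    rw [← (hmem a i).choose_spec, ← (hmem b i).choose_spec]
    exact congrArg _ (congrFun hab i)
  haveI := isNoetherian_of_injective g hginj
  exact (Submodule.fg_top _).mp (IsNoetherian.noetherian ⊤)

/-- The key reconstruction: equal invariants imply conjugate homomorphisms. -/
lemma conj_of_eq {v : Fin n → K} (hv : v ≠ 0) (hn : n = Module.finrank K L)
    (hσ : ∀ c : K, sigmaFun ρ hΓ (phiL_bijective ρ hΓ hn hv) c
          = sigmaFun ρ' hΓ (phiL_bijective ρ' hΓ hn hv) c)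
    (x₀ : L) (hx₀ : x₀ ≠ 0)
    (hI : ∀ y : L, y ∈ idealSub ρ' hΓ v ↔ ∃ z ∈ idealSub ρ hΓ v, y = x₀ * z) :
    ∃ u : (Matrix (Fin n) (Fin n) (𝓞 K))ˣ, ∀ a : Γ,
      ρ' a = (u : Matrix (Fin n) (Fin n) (𝓞 K)) * ρ a
        * ((u⁻¹ : (Matrix (Fin n) (Fin n) (𝓞 K))ˣ) : Matrix (Fin n) (Fin n) (𝓞 K)) := by
  have hb := phiL_bijective ρ hΓ hn hv
  have hb' := phiL_bijective ρ' hΓ hn hv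
  set π : (Fin n → K) → L := fun w => (hb.surjective w).choose with hπdef
  have hπ : ∀ w, phiL ρ hΓ v (π w) = w := fun w => (hb.surjective w).choose_spec
  set π' : (Fin n → K) → L := fun w => (hb'.surjective w).choose with hπ'def
  have hπ' : ∀ w, phiL ρ' hΓ v (π' w) = w := fun w => (hb'.surjective w).choose_spec
  have hπφ : ∀ x : L, π (phiL ρ hΓ v x) = x := fun x => hb.injective (hπ _)
  have hπ'φ : ∀ x : L, π' (phiL ρ' hΓ v x) = x := fun x => hb'.injective (hπ' _)
  have hπadd : ∀ w w', π (w + w') = π w + π w' := by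
    intro w w'; apply hb.injective; rw [hπ, _root_.map_add, hπ, hπ]
  have hπ'add : ∀ w w', π' (w + w') = π' w + π' w' := by
    intro w w'; apply hb'.injective; rw [hπ', _root_.map_add, hπ', hπ']
  have hπsmul : ∀ (c : K) w, π (c • w) = sigmaFun ρ hΓ hb c * π w := by
    intro c w; apply hb.injective
    rw [hπ, phiL_mul, hπ, mulVec_sigma]
  have hπ'smul : ∀ (c : K) w, π' (c • w) = sigmaFun ρ' hΓ hb' c * π' w := by
    intro c w; apply hb'.injective
    rw [hπ', phiL_mul, hπ', mulVec_sigma]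
  -- the intertwiner and its inverse
  set ψfun : (Fin n → K) → (Fin n → K) := fun w => phiL ρ' hΓ v (x₀ * π w) with hψdef
  set ψ'fun : (Fin n → K) → (Fin n → K) := fun w => phiL ρ hΓ v (x₀⁻¹ * π' w) with hψ'def
  have hψadd : ∀ w w', ψfun (w + w') = ψfun w + ψfun w' := by
    intro w w'
    show phiL ρ' hΓ v (x₀ * π (w + w')) = phiL ρ' hΓ v (x₀ * π w) + phiL ρ' hΓ v (x₀ * π w')
    rw [hπadd, mul_add, _root_.map_add]
  have hψ'add : ∀ w w', ψ'fun (w + w') = ψ'fun w + ψ'fun w' := by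
    intro w w'
    show phiL ρ hΓ v (x₀⁻¹ * π' (w + w'))
        = phiL ρ hΓ v (x₀⁻¹ * π' w) + phiL ρ hΓ v (x₀⁻¹ * π' w')
    rw [hπ'add, mul_add, _root_.map_add]
  have hψsmul : ∀ (c : K) w, ψfun (c • w) = c • ψfun w := by
    intro c w
    show phiL ρ' hΓ v (x₀ * π (c • w)) = c • phiL ρ' hΓ v (x₀ * π w)
    rw [hπsmul, hσ c,
      show x₀ * (sigmaFun ρ' hΓ hb' c * π w) = sigmaFun ρ' hΓ hb' c * (x₀ * π w) by ring,
      phiL_mul, mulVec_sigma]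
  have hψ'smul : ∀ (c : K) w, ψ'fun (c • w) = c • ψ'fun w := by
    intro c w
    show phiL ρ hΓ v (x₀⁻¹ * π' (c • w)) = c • phiL ρ hΓ v (x₀⁻¹ * π' w)
    rw [hπ'smul, ← hσ c,
      show x₀⁻¹ * (sigmaFun ρ hΓ hb c * π' w) = sigmaFun ρ hΓ hb c * (x₀⁻¹ * π' w) by ring,
      phiL_mul, mulVec_sigma]
  have hcomp : ∀ w, ψfun (ψ'fun w) = w := by
    intro w
    show phiL ρ' hΓ v (x₀ * π (phiL ρ hΓ v (x₀⁻¹ * π' w))) = w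
    rw [hπφ, show x₀ * (x₀⁻¹ * π' w) = π' w by field_simp]
    exact hπ' w
  have hcomp' : ∀ w, ψ'fun (ψfun w) = w := by
    intro w
    show phiL ρ hΓ v (x₀⁻¹ * π' (phiL ρ' hΓ v (x₀ * π w))) = w
    rw [hπ'φ, show x₀⁻¹ * (x₀ * π w) = π w by field_simp]
    exact hπ w
  -- integrality of both directions
  have hψint : ∀ w, (∀ i, w i ∈ (algebraMap (𝓞 K) K).range) →
      ∀ i, ψfun w i ∈ (algebraMap (𝓞 K) K).range := by
    intro w hw
    have h1 : π w ∈ idealSub ρ hΓ v := by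
      rw [idealSub_mem]
      intro i
      rw [hπ]
      exact hw i
    exact (hI _).mpr ⟨π w, h1, rfl⟩
  have hψ'int : ∀ w, (∀ i, w i ∈ (algebraMap (𝓞 K) K).range) →
      ∀ i, ψ'fun w i ∈ (algebraMap (𝓞 K) K).range := by
    intro w hw
    have h1 : π' w ∈ idealSub ρ' hΓ v := by
      rw [idealSub_mem]
      intro i
      rw [hπ']
      exact hw i
    obtain ⟨z, hz, hzz⟩ := (hI _).mp h1
    have he : x₀⁻¹ * π' w = z := by rw [hzz]; field_simp
    intro i
    show phiL ρ hΓ v (x₀⁻¹ * π' w) i ∈ _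
    rw [he]
    exact hz i
  -- bundle as linear maps and take matrices
  let ψ : (Fin n → K) →ₗ[K] (Fin n → K) :=
    { toFun := ψfun, map_add' := hψadd, map_smul' := hψsmul }
  let ψ' : (Fin n → K) →ₗ[K] (Fin n → K) :=
    { toFun := ψ'fun, map_add' := hψ'add, map_smul' := hψ'smul }
  set U := LinearMap.toMatrix' ψ with hUdef
  set U' := LinearMap.toMatrix' ψ' with hU'def
  have hUvec : ∀ w, U *ᵥ w = ψfun w := by
    intro w
    rw [← Matrix.toLin'_apply, hUdef, Matrix.toLin'_toMatrix']
    rfl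
  have hU'vec : ∀ w, U' *ᵥ w = ψ'fun w := by
    intro w
    rw [← Matrix.toLin'_apply, hU'def, Matrix.toLin'_toMatrix']
    rfl
  have hUU' : U * U' = 1 := by
    rw [hUdef, hU'def, ← LinearMap.toMatrix'_comp]
    rw [show ψ ∘ₗ ψ' = LinearMap.id from LinearMap.ext fun w => hcomp w]
    exact LinearMap.toMatrix'_id
  have hU'U : U' * U = 1 := by
    rw [hUdef, hU'def, ← LinearMap.toMatrix'_comp]
    rw [show ψ' ∘ₗ ψ = LinearMap.id from LinearMap.ext fun w => hcomp' w]
    exact LinearMap.toMatrix'_id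
  have hbasisint : ∀ j : Fin n, ∀ k : Fin n,
      (fun j' : Fin n => if j' = j then (1 : K) else 0) k ∈ (algebraMap (𝓞 K) K).range := by
    intro j k
    by_cases h : k = j
    · simp only [h, if_pos rfl]
      exact ⟨1, _root_.map_one _⟩
    · simp only [if_neg h]
      exact ⟨0, _root_.map_zero _⟩
  have hUent : ∀ i j, U i j ∈ (algebraMap (𝓞 K) K).range := by
    intro i j
    rw [hUdef, LinearMap.toMatrix'_apply]
    rw [show (Pi.single j (1 : K) : Fin n → K) = fun j' => if j' = j then 1 else 0 from
      funext fun k => Pi.single_apply j 1 k]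
    exact hψint _ (hbasisint j) i
  have hU'ent : ∀ i j, U' i j ∈ (algebraMap (𝓞 K) K).range := by
    intro i j
    rw [hU'def, LinearMap.toMatrix'_apply]
    rw [show (Pi.single j (1 : K) : Fin n → K) = fun j' => if j' = j then 1 else 0 from
      funext fun k => Pi.single_apply j 1 k]
    exact hψ'int _ (hbasisint j) i
  -- lift to matrices over 𝓞 K
  let u0 : Matrix (Fin n) (Fin n) (𝓞 K) := Matrix.of fun i j => (hUent i j).choose
  let u0' : Matrix (Fin n) (Fin n) (𝓞 K) := Matrix.of fun i j => (hU'ent i j).choose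
  have hu0 : u0.map (algebraMap (𝓞 K) K) = U := by
    ext i j
    exact (hUent i j).choose_spec
  have hu0' : u0'.map (algebraMap (𝓞 K) K) = U' := by
    ext i j
    exact (hU'ent i j).choose_spec
  have huu : u0 * u0' = 1 := matmap_inj _ _ (by rw [matmap_mul, hu0, hu0', hUU', matmap_one])
  have huu' : u0' * u0 = 1 := matmap_inj _ _ (by rw [matmap_mul, hu0, hu0', hU'U, matmap_one])
  refine ⟨⟨u0, u0', huu, huu'⟩, ?_⟩
  intro γ
  show ρ' γ = u0 * ρ γ * u0'
  apply matmap_inj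
  rw [matmap_mul, matmap_mul, hu0, hu0']
  -- prove the matrix identity by applying both sides to vectors
  have hint : ∀ w', ψfun ((ρ γ).map (algebraMap (𝓞 K) K) *ᵥ w')
      = (ρ' γ).map (algebraMap (𝓞 K) K) *ᵥ ψfun w' := by
    intro w'
    have hπγ : π ((ρ γ).map (algebraMap (𝓞 K) K) *ᵥ w') = (γ : L) * π w' := by
      apply hb.injective
      rw [hπ, phiL_mul, hπ, ellH_coe]
    show phiL ρ' hΓ v (x₀ * π ((ρ γ).map (algebraMap (𝓞 K) K) *ᵥ w'))
        = (ρ' γ).map (algebraMap (𝓞 K) K) *ᵥ phiL ρ' hΓ v (x₀ * π w')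
    rw [hπγ, show x₀ * ((γ : L) * π w') = (γ : L) * (x₀ * π w') by ring, phiL_mul, ellH_coe]
  have hvec : ∀ w, (ρ' γ).map (algebraMap (𝓞 K) K) *ᵥ w
      = (U * ((ρ γ).map (algebraMap (𝓞 K) K)) * U') *ᵥ w := by
    intro w
    rw [← Matrix.mulVec_mulVec, ← Matrix.mulVec_mulVec, hU'vec, hUvec, hint, hcomp]
  exact Matrix.toLin'.injective (LinearMap.ext fun w => by
    rw [Matrix.toLin'_apply, Matrix.toLin'_apply, hvec w])

end Main3

/-- Let `L` be a number field, `Γ` an order of `L`, `K ⊆ L` a subfield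
with ring of integers `O_K`, `n = [L:K]`, and `R = Mₙ(O_K)`.  There is an injective map
from the set of `Γ`-structures on `R` (ring homomorphisms `Γ → R` modulo conjugation by
units of `R`) into the product of the set of ring homomorphisms `K → L` with the set
`C_Γ` of equivalence classes of fractional ideals of `Γ`. -/
theorem gammaStructures_inject_into_ringHoms_times_idealClasses
    (L K : Type*) [Field L] [NumberField L] [Field K] [NumberField K] [Algebra K L]
    (Γ : Subring L) (hΓfin : Module.Finite ℤ Γ)
    (hΓspan : Submodule.span ℚ (Γ : Set L) = ⊤)
    (n : ℕ) (hn : n = Module.finrank K L) :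
    ∃ f : Quot (ConjRel Γ (Matrix (Fin n) (Fin n) (𝓞 K))) →
        (K →+* L) × Quot (FracIdealRel L Γ),
      Function.Injective f := by
  have hΓ : ∀ x : L, ∃ m : ℤ, m ≠ 0 ∧ (m : L) * x ∈ Γ := exists_int_mul_mem hΓspan
  have hnpos : 0 < n := hn ▸ Module.finrank_pos
  set i0 : Fin n := ⟨0, hnpos⟩ with hi0
  set v₀ : Fin n → K := Pi.single i0 1 with hv₀def
  have hv₀ : v₀ ≠ 0 := by
    intro h0
    have h1 := congrFun h0 i0
    simp [hv₀def] at h1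
  have hv₀int : ∀ i, v₀ i ∈ (algebraMap (𝓞 K) K).range := by
    intro i
    rcases eq_or_ne i i0 with rfl | hne
    · rw [hv₀def, Pi.single_eq_same]
      exact ⟨1, _root_.map_one _⟩
    · rw [hv₀def, Pi.single_eq_of_ne hne]
      exact ⟨0, _root_.map_zero _⟩
  have hb : ∀ ρ : Γ →+* Matrix (Fin n) (Fin n) (𝓞 K), Function.Bijective (phiL ρ hΓ v₀) :=
    fun ρ => phiL_bijective ρ hΓ hn hv₀
  have hne : ∀ ρ : Γ →+* Matrix (Fin n) (Fin n) (𝓞 K), idealSub ρ hΓ v₀ ≠ ⊥ := by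
    intro ρ h0
    have h1 : (1 : L) ∈ idealSub ρ hΓ v₀ := by
      rw [idealSub_mem]
      intro i
      rw [phiL_apply, _root_.map_one, Matrix.one_mulVec]
      exact hv₀int i
    rw [h0, Submodule.mem_bot] at h1
    exact one_ne_zero h1
  let F : (Γ →+* Matrix (Fin n) (Fin n) (𝓞 K)) → (K →+* L) × Quot (FracIdealRel L Γ) :=
    fun ρ => (sigmaHom ρ hΓ (hb ρ),
      Quot.mk _ ⟨idealSub ρ hΓ v₀, hne ρ, idealSub_fg ρ hΓ hv₀⟩)
  have hF : ∀ ρ ρ', ConjRel Γ (Matrix (Fin n) (Fin n) (𝓞 K)) ρ ρ' → F ρ = F ρ' := by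
    intro ρ ρ' hc
    obtain ⟨u, hu⟩ := hc
    have hell := ellH_conj ρ ρ' hΓ u hu
    have hUW : ∀ w : Fin n → K,
        ((u : Matrix (Fin n) (Fin n) (𝓞 K)).map (algebraMap (𝓞 K) K)) *ᵥ
          ((((u⁻¹ : (Matrix (Fin n) (Fin n) (𝓞 K))ˣ) : Matrix (Fin n) (Fin n) (𝓞 K)).map
            (algebraMap (𝓞 K) K)) *ᵥ w) = w := by
      intro w
      rw [Matrix.mulVec_mulVec, ← matmap_mul, u.mul_inv, matmap_one, Matrix.one_mulVec]
    have hσ : sigmaHom ρ hΓ (hb ρ) = sigmaHom ρ' hΓ (hb ρ') := by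
      ext c
      show sigmaFun ρ hΓ (hb ρ) c = sigmaFun ρ' hΓ (hb ρ') c
      refine sigma_unique ρ' hΓ (hb ρ') c _ ?_
      rw [phiL_apply, hell, ← Matrix.mulVec_mulVec, ← Matrix.mulVec_mulVec,
        mulVec_sigma, Matrix.mulVec_smul, hUW]
    obtain ⟨t, ht⟩ := (hb ρ).surjective
      ((((u⁻¹ : (Matrix (Fin n) (Fin n) (𝓞 K))ˣ) : Matrix (Fin n) (Fin n) (𝓞 K)).map
        (algebraMap (𝓞 K) K)) *ᵥ v₀)
    have htne : t ≠ 0 := by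
      intro h0
      rw [h0, _root_.map_zero] at ht
      apply hv₀
      rw [← hUW v₀, ← ht, Matrix.mulVec_zero]
    have hmem' : ∀ y : L, y ∈ idealSub ρ' hΓ v₀ ↔ y * t ∈ idealSub ρ hΓ v₀ := by
      intro y
      rw [idealSub_mem, idealSub_mem]
      have he : phiL ρ' hΓ v₀ y
          = ((u : Matrix (Fin n) (Fin n) (𝓞 K)).map (algebraMap (𝓞 K) K))
            *ᵥ phiL ρ hΓ v₀ (y * t) := by
        rw [phiL_apply, hell, ← Matrix.mulVec_mulVec, ← Matrix.mulVec_mulVec, ← ht, ← phiL_mul]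
      rw [he]
      exact unit_mulVec_int_iff u _
    have hq : Quot.mk (FracIdealRel L Γ)
        (⟨idealSub ρ hΓ v₀, hne ρ, idealSub_fg ρ hΓ hv₀⟩ : FractionalIdealOf L Γ)
        = Quot.mk _ ⟨idealSub ρ' hΓ v₀, hne ρ', idealSub_fg ρ' hΓ hv₀⟩ := by
      apply Quot.sound
      refine ⟨t⁻¹, inv_ne_zero htne, fun y => ?_⟩
      constructor
      · intro hy
        refine ⟨y * t, (hmem' y).mp hy, ?_⟩
        field_simp
      · rintro ⟨z, hz, rfl⟩
        apply (hmem' _).mpr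
        rw [show t⁻¹ * z * t = z by field_simp]
        exact hz
    exact Prod.ext hσ hq
  refine ⟨Quot.lift F hF, ?_⟩
  refine Quot.ind fun ρ => Quot.ind fun ρ' hab => ?_
  apply Quot.sound
  have hab' : F ρ = F ρ' := hab
  have hσ : sigmaHom ρ hΓ (hb ρ) = sigmaHom ρ' hΓ (hb ρ') := congrArg Prod.fst hab'
  have hqq : Quot.mk (FracIdealRel L Γ)
      (⟨idealSub ρ hΓ v₀, hne ρ, idealSub_fg ρ hΓ hv₀⟩ : FractionalIdealOf L Γ)
      = Quot.mk _ ⟨idealSub ρ' hΓ v₀, hne ρ', idealSub_fg ρ' hΓ hv₀⟩ :=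
    congrArg Prod.snd hab'
  have hrel : FracIdealRel L Γ ⟨idealSub ρ hΓ v₀, hne ρ, idealSub_fg ρ hΓ hv₀⟩
      ⟨idealSub ρ' hΓ v₀, hne ρ', idealSub_fg ρ' hΓ hv₀⟩ :=
    ((fracIdealRel_equivalence L Γ).eqvGen_iff).mp (Quot.eqvGen_exact hqq)
  obtain ⟨x₀, hx₀, hI⟩ := hrel
  have hσ' : ∀ c : K, sigmaFun ρ hΓ (phiL_bijective ρ hΓ hn hv₀) c
      = sigmaFun ρ' hΓ (phiL_bijective ρ' hΓ hn hv₀) c := by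
    intro c
    exact RingHom.congr_fun hσ c
  obtain ⟨u, hu⟩ := conj_of_eq ρ ρ' hΓ hv₀ hn hσ' x₀ hx₀ hI
  exact ⟨u, hu⟩
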